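/- Let A be a differential ring and s ∈ A. The contraction map along the localization homomorphism A → A_s induces a homeomorphism from Spec^Δ(A_s) onto the open subset X_s = {p ∈ Spec^Δ A : s ∉ p} of Spec^Δ A. -/

import Mathlib

/-- An ideal is a differential ideal w.r.t. a family of derivation maps `d`. -/
def IsDiffIdeal {A : Type*} [CommRing A] {k : ℕ} (d : Fin k → A → A) (I : Ideal A) : Prop :=
  ∀ i : Fin k, ∀ x ∈ I, d i x ∈ I

/-- The differential spectrum: prime differential ideals, with the Kolchin topology
(the subspace topology induced from the Zariski topology on `PrimeSpectrum`). -/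
abbrev DiffSpec {A : Type*} [CommRing A] {k : ℕ} (d : Fin k → A → A) :=
  {p : PrimeSpectrum A // IsDiffIdeal d p.asIdeal}

/-- A Keigher ring: the radical of every differential ideal is differential. -/
def IsKeigher {A : Type*} [CommRing A] {k : ℕ} (d : Fin k → A → A) : Prop :=
  ∀ I : Ideal A, IsDiffIdeal d I → IsDiffIdeal d I.radical

/-- `radDiffGen d E` is the smallest radical differential ideal containing `E`. -/
def radDiffGen {A : Type*} [CommRing A] {k : ℕ} (d : Fin k → A → A) (E : Set A) : Ideal A :=
  sInf {I : Ideal A | E ⊆ I ∧ I.IsRadical ∧ IsDiffIdeal d I}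

/-- Contraction along `A → A_s` is a homeomorphism from `Spec^Δ (A_s)` onto the open
set `X_s = {p : s ∉ p}` of `Spec^Δ A`. -/
theorem stmt5 {A : Type*} [CommRing A] {k : ℕ} (δ : Fin k → Derivation ℤ A A)
    (hcomm : ∀ i j a, δ i (δ j a) = δ j (δ i a)) (s : A)
    (δ' : Fin k → Derivation ℤ (Localization.Away s) (Localization.Away s))
    (hcompat : ∀ i a, δ' i (algebraMap A (Localization.Away s) a)
      = algebraMap A (Localization.Away s) (δ i a)) :
    ∃ h : DiffSpec (fun i => ⇑(δ' i)) ≃ₜ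
        {p : DiffSpec (fun i => ⇑(δ i)) // s ∉ p.1.asIdeal},
      ∀ q, (h q).1.1.asIdeal
        = Ideal.comap (algebraMap A (Localization.Away s)) q.1.asIdeal := by
  classical
  set L := Localization.Away s with hL
  let f : PrimeSpectrum L → PrimeSpectrum A := PrimeSpectrum.comap (algebraMap A L)
  have hemb := PrimeSpectrum.localization_away_isOpenEmbedding (Localization.Away s) s
  let e : PrimeSpectrum L ≃ₜ Set.range f := Topology.IsEmbedding.toHomeomorph (f := f) hemb.toIsEmbedding
  have he_apply : ∀ q : PrimeSpectrum L, (e q : PrimeSpectrum A) = f q := fun _ => rfl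
  have hfe : ∀ x : Set.range f, f (e.symm x) = (x : PrimeSpectrum A) := by
    intro x
    have := congrArg Subtype.val (e.apply_symm_apply x)
    exact (he_apply (e.symm x)).symm.trans this
  -- forward direction on differential ideals
  have hA : ∀ q : PrimeSpectrum L, IsDiffIdeal (fun i => ⇑(δ' i)) q.asIdeal →
      IsDiffIdeal (fun i => ⇑(δ i)) (f q).asIdeal := by
    intro q hq i x hx
    have : algebraMap A L x ∈ q.asIdeal := hx
    have h1 : δ' i (algebraMap A L x) ∈ q.asIdeal := hq i _ this
    rw [hcompat] at h1
    exact h1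
  -- backward direction
  have hB : ∀ q : PrimeSpectrum L,
      IsDiffIdeal (fun i => ⇑(δ i)) (Ideal.comap (algebraMap A L) q.asIdeal) →
      IsDiffIdeal (fun i => ⇑(δ' i)) q.asIdeal := by
    intro q hq i x hx
    obtain ⟨⟨a, m⟩, hm⟩ := IsLocalization.surj (Submonoid.powers s) x
    have ha : algebraMap A L a ∈ q.asIdeal := by
      rw [← hm]; exact Ideal.mul_mem_right _ _ hx
    have hda : algebraMap A L (δ i a) ∈ q.asIdeal := hq i a ha
    have hleib : x * algebraMap A L (δ i (m : A)) + algebraMap A L (m : A) * δ' i x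
        = algebraMap A L (δ i a) := by
      have := congrArg (δ' i) hm
      rw [Derivation.leibniz, hcompat, hcompat, smul_eq_mul, smul_eq_mul] at this
      exact this
    have hmem : algebraMap A L (m : A) * δ' i x ∈ q.asIdeal := by
      have : algebraMap A L (m : A) * δ' i x
          = algebraMap A L (δ i a) - x * algebraMap A L (δ i (m : A)) := by
        rw [← hleib]; ring
      rw [this]
      exact Ideal.sub_mem _ hda (Ideal.mul_mem_right _ _ hx)
    have hu : IsUnit (algebraMap A L (m : A)) := IsLocalization.map_units L m
    exact (Ideal.unit_mul_mem_iff_mem _ hu).mp hmem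
  -- s is not in the contraction
  have hs : ∀ q : PrimeSpectrum L, s ∉ (f q).asIdeal := by
    intro q hsq
    have hu : IsUnit (algebraMap A L s) :=
      IsLocalization.map_units L (⟨s, Submonoid.mem_powers s⟩ : Submonoid.powers s)
    exact q.isPrime.ne_top (Ideal.eq_top_of_isUnit_mem _ hsq hu)
  -- membership in the range for the inverse map
  have hrange : ∀ p : {p : DiffSpec (fun i => ⇑(δ i)) // s ∉ p.1.asIdeal},
      p.1.1 ∈ Set.range f := by
    intro p
    rw [show Set.range f = ↑(PrimeSpectrum.basicOpen s) from
      PrimeSpectrum.localization_away_comap_range (Localization.Away s) s]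
    exact (PrimeSpectrum.mem_basicOpen s p.1.1).mpr p.2
  refine ⟨⟨⟨fun q => ⟨⟨f q.1, hA q.1 q.2⟩, hs q.1⟩,
    fun p => ⟨e.symm ⟨p.1.1, hrange p⟩, ?_⟩, ?_, ?_⟩, ?_, ?_⟩, fun q => rfl⟩
  · apply hB
    have : (f (e.symm ⟨p.1.1, hrange p⟩)).asIdeal = p.1.1.asIdeal := by
      rw [hfe ⟨p.1.1, hrange p⟩]
    rw [show Ideal.comap (algebraMap A L) (e.symm ⟨p.1.1, hrange p⟩ : PrimeSpectrum L).asIdeal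
        = (f (e.symm ⟨p.1.1, hrange p⟩)).asIdeal from rfl, this]
    exact p.1.2
  · intro q
    apply Subtype.ext
    have h1 : (⟨f q.1, hrange ⟨⟨f q.1, hA q.1 q.2⟩, hs q.1⟩⟩ : Set.range f) = e q.1 :=
      Subtype.ext (he_apply q.1).symm
    exact (congrArg e.symm h1).trans (e.symm_apply_apply q.1)
  · intro p
    apply Subtype.ext
    apply Subtype.ext
    exact hfe ⟨p.1.1, hrange p⟩
  · exact ((hemb.continuous.comp continuous_subtype_val).subtype_mk _).subtype_mk _
  · exact (e.symm.continuous.comp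
      (((continuous_subtype_val.comp continuous_subtype_val).subtype_mk _))).subtype_mk _
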